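/- Minimax existence for bilinear games on simplices: for a finite matrix game with payoff function (p, q) ↦ Σ_{a,b} p(a) q(b) G(a,b) where G : A × B → ℝ and p, q range over the probability simplices Δ(A), Δ(B) for finite sets A, B, the max-min equals the min-max: max_{p ∈ Δ(A)} min_{q ∈ Δ(B)} p^T G q = min_{q ∈ Δ(B)} max_{p ∈ Δ(A)} p^T G q, and both extrema are attained. -/

import Mathlib

open Finset Set Pointwise

theorem minimax_alt {A B : Type*} [Fintype A] [Fintype B] [Nonempty A] [Nonempty B]
    (G : A → B → ℝ) :
    (∃ q ∈ stdSimplex ℝ B, ∀ a, ∑ b, q b * G a b ≤ 0) ∨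
    (∃ p ∈ stdSimplex ℝ A, ∀ b, 0 < ∑ a, p a * G a b) := by
  classical
  set L : (B → ℝ) → (A → ℝ) := fun q a => ∑ b, q b * G a b with hL
  have hLcont : Continuous L := by
    apply continuous_pi
    intro a
    exact continuous_finset_sum _ fun b _ => (continuous_apply b).mul continuous_const
  set P : Set (A → ℝ) := {x | ∀ a, 0 ≤ x a} with hP
  have hPeq : P = Set.pi Set.univ (fun _ : A => Ici (0:ℝ)) := by
    ext x; simp [hP, Set.mem_pi, Pi.le_def]
  have hPclosed : IsClosed P := by
    rw [hPeq]; exact isClosed_set_pi fun a _ => isClosed_Ici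
  have hPconvex : Convex ℝ P := by
    rw [hPeq]; exact convex_pi fun a _ => convex_Ici 0
  set C : Set (A → ℝ) := (L '' stdSimplex ℝ B) + P with hC
  have hLlin : IsLinearMap ℝ L := by
    constructor
    · intro x y; funext a; simp [hL, add_mul, Finset.sum_add_distrib]
    · intro c x; funext a; simp [hL, Finset.mul_sum, mul_assoc]
  have hCconvex : Convex ℝ C :=
    Convex.add ((convex_stdSimplex ℝ B).is_linear_image hLlin) hPconvex
  have hCclosed : IsClosed C :=
    hPclosed.add_left_of_isCompact ((isCompact_stdSimplex ℝ B).image hLcont)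
  by_cases h0 : (0 : A → ℝ) ∈ C
  · left
    obtain ⟨y, hy, z, hz, hyz⟩ := Set.mem_add.1 h0
    obtain ⟨q, hq, rfl⟩ := hy
    refine ⟨q, hq, fun a => ?_⟩
    have h1 := congrFun hyz a
    have hza := hz a
    simp only [Pi.add_apply, Pi.zero_apply] at h1
    show L q a ≤ 0
    linarith
  · right
    obtain ⟨f, u, hfu, hCf⟩ := geometric_hahn_banach_point_closed hCconvex hCclosed h0
    have hu : 0 < u := by simpa using hfu
    set c : A → ℝ := fun a => f (fun j => if a = j then (1:ℝ) else 0) with hc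
    have hfx : ∀ x : A → ℝ, f x = ∑ a, x a * c a := by
      intro x
      conv_lhs => rw [pi_eq_sum_univ x]
      rw [map_sum]
      exact Finset.sum_congr rfl fun a _ => by rw [map_smul]; simp [hc, smul_eq_mul]
    set q0 : B → ℝ := fun j => if Classical.arbitrary B = j then (1:ℝ) else 0 with hq0def
    have hq0 : q0 ∈ stdSimplex ℝ B := ite_eq_mem_stdSimplex ℝ _
    set x0 : A → ℝ := L q0 with hx0
    have hx0C : ∀ z ∈ P, x0 + z ∈ C := fun z hz =>
      Set.add_mem_add ⟨q0, hq0, rfl⟩ hz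
    have hx0mem : x0 ∈ C := by
      have := hx0C 0 (fun a => le_rfl)
      simpa using this
    have hux0 : u < f x0 := hCf x0 hx0mem
    have hcnn : ∀ a, 0 ≤ c a := by
      intro a
      by_contra hneg
      push_neg at hneg
      set t : ℝ := (f x0 - u + 1) / (-c a) with ht
      have htpos : 0 ≤ t := div_nonneg (by linarith) (by linarith)
      have hmemP : (t • fun j => if a = j then (1:ℝ) else 0) ∈ P := by
        intro a'
        simp only [Pi.smul_apply, smul_eq_mul]
        split <;> simp [htpos]
      have hmem := hCf _ (hx0C _ hmemP)
      rw [map_add, map_smul, smul_eq_mul] at hmem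
      have hca : c a ≠ 0 := ne_of_lt hneg
      have h1 : t * (-c a) = f x0 - u + 1 := div_mul_cancel₀ _ (neg_ne_zero.mpr hca)
      have hta : t * c a = -(f x0 - u + 1) := by rw [← h1]; ring
      rw [show f (fun j => if a = j then (1:ℝ) else 0) = c a from rfl, hta] at hmem
      linarith
    have hcol : ∀ b, u < ∑ a, G a b * c a := by
      intro b
      have hmem : L (fun j => if b = j then (1:ℝ) else 0) ∈ C := by
        have := Set.add_mem_add (Set.mem_image_of_mem L (ite_eq_mem_stdSimplex ℝ b))
          (show (0 : A → ℝ) ∈ P from fun a => le_rfl)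
        simpa using this
      have h1 := hCf _ hmem
      rw [hfx] at h1
      have h2 : ∀ a, L (fun j => if b = j then (1:ℝ) else 0) a = G a b := by
        intro a
        simp [hL, ite_mul, Finset.sum_ite_eq]
      calc u < ∑ a, L (fun j => if b = j then (1:ℝ) else 0) a * c a := h1
        _ = ∑ a, G a b * c a := Finset.sum_congr rfl fun a _ => by rw [h2]
    set s : ℝ := ∑ a, c a with hs
    have hs0 : 0 ≤ s := Finset.sum_nonneg fun a _ => hcnn a
    have hsne : s ≠ 0 := by
      intro hzero
      have hall : ∀ a ∈ Finset.univ, c a = 0 :=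
        (Finset.sum_eq_zero_iff_of_nonneg (fun a _ => hcnn a)).1 hzero
      have := hcol (Classical.arbitrary B)
      rw [Finset.sum_eq_zero (fun a _ => by rw [hall a (Finset.mem_univ a), mul_zero])] at this
      linarith
    have hspos : 0 < s := lt_of_le_of_ne hs0 (Ne.symm hsne)
    refine ⟨fun a => c a / s, ⟨fun a => div_nonneg (hcnn a) hs0, by
      rw [← Finset.sum_div]; exact div_self hsne⟩, fun b => ?_⟩
    have : ∑ a, c a / s * G a b = (∑ a, G a b * c a) / s := by
      rw [Finset.sum_div]
      exact Finset.sum_congr rfl fun a _ => by ring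
    rw [this]
    exact div_pos (lt_trans hu (hcol b)) hspos

open Finset

theorem dot_lb {B : Type*} [Fintype B] [Nonempty B] (w : B → ℝ) (q : stdSimplex ℝ B) :
    Finset.univ.inf' Finset.univ_nonempty w ≤ ∑ b, (q : B → ℝ) b * w b := by
  have h : ∀ b ∈ Finset.univ, (q : B → ℝ) b * (Finset.univ.inf' Finset.univ_nonempty w)
      ≤ (q : B → ℝ) b * w b := fun b _ =>
    mul_le_mul_of_nonneg_left (Finset.inf'_le _ (Finset.mem_univ b)) (q.2.1 b)
  calc Finset.univ.inf' Finset.univ_nonempty w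
      = ∑ b, (q : B → ℝ) b * Finset.univ.inf' Finset.univ_nonempty w := by
        rw [← Finset.sum_mul, show ∑ b, (q : B → ℝ) b = 1 from q.2.2, one_mul]
    _ ≤ ∑ b, (q : B → ℝ) b * w b := Finset.sum_le_sum h

theorem dot_ub {B : Type*} [Fintype B] [Nonempty B] (w : B → ℝ) (q : stdSimplex ℝ B) :
    ∑ b, (q : B → ℝ) b * w b ≤ Finset.univ.sup' Finset.univ_nonempty w := by
  have h : ∀ b ∈ Finset.univ, (q : B → ℝ) b * w b
      ≤ (q : B → ℝ) b * Finset.univ.sup' Finset.univ_nonempty w := fun b _ =>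
    mul_le_mul_of_nonneg_left (Finset.le_sup' _ (Finset.mem_univ b)) (q.2.1 b)
  calc ∑ b, (q : B → ℝ) b * w b
      ≤ ∑ b, (q : B → ℝ) b * Finset.univ.sup' Finset.univ_nonempty w := Finset.sum_le_sum h
    _ = Finset.univ.sup' Finset.univ_nonempty w := by rw [← Finset.sum_mul, show ∑ b, (q : B → ℝ) b = 1 from q.2.2, one_mul]

theorem delta_dot {B : Type*} [Fintype B] [DecidableEq B] (w : B → ℝ) (b0 : B) :
    ∑ b, (if b0 = b then (1:ℝ) else 0) * w b = w b0 := by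
  simp [ite_mul, Finset.sum_ite_eq]

theorem ciInf_dot {B : Type*} [Fintype B] [Nonempty B] (w : B → ℝ) :
    (⨅ q : stdSimplex ℝ B, ∑ b, (q : B → ℝ) b * w b)
      = Finset.univ.inf' Finset.univ_nonempty w := by
  classical
  haveI : Nonempty (stdSimplex ℝ B) := ⟨⟨_, ite_eq_mem_stdSimplex ℝ (Classical.arbitrary B)⟩⟩
  apply le_antisymm
  · obtain ⟨b0, -, hb0⟩ := Finset.exists_mem_eq_inf' Finset.univ_nonempty w
    refine ciInf_le_of_le ⟨Finset.univ.inf' Finset.univ_nonempty w, ?_⟩ ⟨_, ite_eq_mem_stdSimplex ℝ b0⟩ ?_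
    · rintro x ⟨q, rfl⟩; exact dot_lb w q
    · rw [hb0]; exact le_of_eq (delta_dot w b0)
  · exact le_ciInf (dot_lb w)

theorem ciSup_dot {B : Type*} [Fintype B] [Nonempty B] (w : B → ℝ) :
    (⨆ q : stdSimplex ℝ B, ∑ b, (q : B → ℝ) b * w b)
      = Finset.univ.sup' Finset.univ_nonempty w := by
  classical
  haveI : Nonempty (stdSimplex ℝ B) := ⟨⟨_, ite_eq_mem_stdSimplex ℝ (Classical.arbitrary B)⟩⟩
  apply le_antisymm
  · exact ciSup_le (dot_ub w)
  · obtain ⟨b0, -, hb0⟩ := Finset.exists_mem_eq_sup' Finset.univ_nonempty w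
    refine le_ciSup_of_le ⟨Finset.univ.sup' Finset.univ_nonempty w, ?_⟩ ⟨_, ite_eq_mem_stdSimplex ℝ b0⟩ ?_
    · rintro x ⟨q, rfl⟩; exact dot_ub w q
    · rw [hb0]; exact le_of_eq (delta_dot w b0).symm

theorem stmt_19 {A B : Type*} [Fintype A] [Fintype B] [Nonempty A] [Nonempty B]
    (G : A → B → ℝ) :
    (⨆ p : stdSimplex ℝ A, ⨅ q : stdSimplex ℝ B,
        ∑ a, ∑ b, (p : A → ℝ) a * (q : B → ℝ) b * G a b) =
      (⨅ q : stdSimplex ℝ B, ⨆ p : stdSimplex ℝ A,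
        ∑ a, ∑ b, (p : A → ℝ) a * (q : B → ℝ) b * G a b) ∧
    (∃ pstar : stdSimplex ℝ A,
      (⨅ q : stdSimplex ℝ B, ∑ a, ∑ b, (pstar : A → ℝ) a * (q : B → ℝ) b * G a b) =
        ⨆ p : stdSimplex ℝ A, ⨅ q : stdSimplex ℝ B,
          ∑ a, ∑ b, (p : A → ℝ) a * (q : B → ℝ) b * G a b) ∧
    (∃ qstar : stdSimplex ℝ B,
      (⨆ p : stdSimplex ℝ A, ∑ a, ∑ b, (p : A → ℝ) a * (qstar : B → ℝ) b * G a b) =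
        ⨅ q : stdSimplex ℝ B, ⨆ p : stdSimplex ℝ A,
          ∑ a, ∑ b, (p : A → ℝ) a * (q : B → ℝ) b * G a b) := by
  classical
  haveI hnA : Nonempty (stdSimplex ℝ A) := ⟨⟨_, ite_eq_mem_stdSimplex ℝ (Classical.arbitrary A)⟩⟩
  haveI hnB : Nonempty (stdSimplex ℝ B) := ⟨⟨_, ite_eq_mem_stdSimplex ℝ (Classical.arbitrary B)⟩⟩
  have hFq : ∀ (p : A → ℝ) (q : B → ℝ),
      ∑ a, ∑ b, p a * q b * G a b = ∑ b, q b * (∑ a, p a * G a b) := by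
    intro p q
    rw [Finset.sum_comm]
    refine Finset.sum_congr rfl fun b _ => ?_
    rw [Finset.mul_sum]
    exact Finset.sum_congr rfl fun a _ => by ring
  have hFp : ∀ (p : A → ℝ) (q : B → ℝ),
      ∑ a, ∑ b, p a * q b * G a b = ∑ a, p a * (∑ b, q b * G a b) := by
    intro p q
    refine Finset.sum_congr rfl fun a _ => ?_
    rw [Finset.mul_sum]
    exact Finset.sum_congr rfl fun b _ => by ring
  set g : (A → ℝ) → ℝ :=
    fun p => Finset.univ.inf' Finset.univ_nonempty (fun b => ∑ a, p a * G a b) with hgdef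
  set h : (B → ℝ) → ℝ :=
    fun q => Finset.univ.sup' Finset.univ_nonempty (fun a => ∑ b, q b * G a b) with hhdef
  have hg : ∀ p : A → ℝ,
      (⨅ q : stdSimplex ℝ B, ∑ a, ∑ b, p a * (q : B → ℝ) b * G a b) = g p := by
    intro p
    rw [iInf_congr (fun q : stdSimplex ℝ B => hFq p (q : B → ℝ))]
    exact ciInf_dot _
  have hh : ∀ q : B → ℝ,
      (⨆ p : stdSimplex ℝ A, ∑ a, ∑ b, (p : A → ℝ) a * q b * G a b) = h q := by
    intro q
    rw [iSup_congr (fun p : stdSimplex ℝ A => hFp (p : A → ℝ) q)]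
    exact ciSup_dot _
  have hgcont : Continuous g := Continuous.finset_inf'_apply Finset.univ_nonempty
    (fun b _ => continuous_finset_sum _ fun a _ => (continuous_apply a).mul continuous_const)
  have hhcont : Continuous h := Continuous.finset_sup'_apply Finset.univ_nonempty
    (fun a _ => continuous_finset_sum _ fun b _ => (continuous_apply b).mul continuous_const)
  obtain ⟨pstar, hpmem, hpmax⟩ := (isCompact_stdSimplex ℝ A).exists_isMaxOn
    ⟨_, ite_eq_mem_stdSimplex ℝ (Classical.arbitrary A)⟩ hgcont.continuousOn
  obtain ⟨qstar, hqmem, hqmin⟩ := (isCompact_stdSimplex ℝ B).exists_isMinOn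
    ⟨_, ite_eq_mem_stdSimplex ℝ (Classical.arbitrary B)⟩ hhcont.continuousOn
  have hpmax' : ∀ x ∈ stdSimplex ℝ A, g x ≤ g pstar := isMaxOn_iff.mp hpmax
  have hqmin' : ∀ x ∈ stdSimplex ℝ B, h qstar ≤ h x := isMinOn_iff.mp hqmin
  have hsupg : (⨆ p : stdSimplex ℝ A, g (p : A → ℝ)) = g pstar :=
    le_antisymm (ciSup_le fun p : stdSimplex ℝ A => hpmax' _ p.2)
      (le_ciSup (f := fun p : stdSimplex ℝ A => g (p : A → ℝ)) ⟨g pstar, by rintro x ⟨(p : stdSimplex ℝ A), rfl⟩; exact hpmax' _ p.2⟩ ⟨pstar, hpmem⟩)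
  have hinfh : (⨅ q : stdSimplex ℝ B, h (q : B → ℝ)) = h qstar :=
    le_antisymm (ciInf_le (f := fun q : stdSimplex ℝ B => h (q : B → ℝ)) ⟨h qstar, by rintro x ⟨(q : stdSimplex ℝ B), rfl⟩; exact hqmin' _ q.2⟩ ⟨qstar, hqmem⟩)
      (le_ciInf fun q : stdSimplex ℝ B => hqmin' _ q.2)
  have hle : g pstar ≤ h qstar := by
    calc g pstar ≤ ∑ b, qstar b * (∑ a, pstar a * G a b) := dot_lb _ ⟨qstar, hqmem⟩
      _ = ∑ a, ∑ b, pstar a * qstar b * G a b := (hFq pstar qstar).symm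
      _ = ∑ a, pstar a * (∑ b, qstar b * G a b) := hFp pstar qstar
      _ ≤ h qstar := dot_ub _ ⟨pstar, hpmem⟩
  have hge : h qstar ≤ g pstar := by
    by_contra hlt
    push_neg at hlt
    set v : ℝ := (g pstar + h qstar) / 2 with hv
    rcases minimax_alt (fun a b => G a b - v) with ⟨q, hq, hq0⟩ | ⟨p, hp, hp0⟩
    · have hqs : ∀ a, ∑ b, q b * G a b ≤ v := by
        intro a
        have hexp : ∑ b, q b * (G a b - v) = (∑ b, q b * G a b) - v := by
          simp only [mul_sub]
          rw [Finset.sum_sub_distrib, ← Finset.sum_mul, hq.2, one_mul]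
        have := hq0 a
        rw [hexp] at this
        linarith
      have h1 : h q ≤ v := Finset.sup'_le _ _ (fun a _ => hqs a)
      have h2 : h qstar ≤ h q := hqmin' _ hq
      rw [hv] at h1
      linarith
    · have hps : ∀ b, v ≤ ∑ a, p a * G a b := by
        intro b
        have hexp : ∑ a, p a * (G a b - v) = (∑ a, p a * G a b) - v := by
          simp only [mul_sub]
          rw [Finset.sum_sub_distrib, ← Finset.sum_mul, hp.2, one_mul]
        have := hp0 b
        rw [hexp] at this
        linarith
      have h1 : v ≤ g p := Finset.le_inf' _ _ (fun b _ => hps b)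
      have h2 : g p ≤ g pstar := hpmax' _ hp
      rw [hv] at h1
      linarith
  have hmain : g pstar = h qstar := le_antisymm hle hge
  have e1 : (⨆ p : stdSimplex ℝ A, ⨅ q : stdSimplex ℝ B,
      ∑ a, ∑ b, (p : A → ℝ) a * (q : B → ℝ) b * G a b) = g pstar := by
    rw [iSup_congr (fun p : stdSimplex ℝ A => hg (p : A → ℝ))]
    exact hsupg
  have e2 : (⨅ q : stdSimplex ℝ B, ⨆ p : stdSimplex ℝ A,
      ∑ a, ∑ b, (p : A → ℝ) a * (q : B → ℝ) b * G a b) = h qstar := by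
    rw [iInf_congr (fun q : stdSimplex ℝ B => hh (q : B → ℝ))]
    exact hinfh
  refine ⟨by rw [e1, e2, hmain], ⟨⟨pstar, hpmem⟩, ?_⟩, ⟨⟨qstar, hqmem⟩, ?_⟩⟩
  · exact (hg pstar).trans e1.symm
  · exact (hh qstar).trans e2.symm
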